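/- Let G be a graph in which every vertex has even degree, with vertices v_1,...,v_n, and suppose its Seidel matrix S has rank n-1. Let φ be the primitive integer nullspace vector of S. Then for all 1 ≤ i, j ≤ n, φ_i - φ_j ≡ 2(d(v_i) - d(v_j)) (mod 8). -/
import Mathlib


open Matrix Finset

def seidelMatrix {n : ℕ} (G : SimpleGraph (Fin n)) [DecidableRel G.Adj] :
    Matrix (Fin n) (Fin n) ℤ :=
  Matrix.of fun i j => if i = j then 0 else if G.Adj i j then -1 else 1

theorem seidel_null_vector_mod_eight {n : ℕ} (G : SimpleGraph (Fin n))
    [DecidableRel G.Adj] (φ : Fin n → ℤ)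
    (heven : ∀ v, Even (G.degree v))
    (hrank : (seidelMatrix G).rank = n - 1)
    (hnull : (seidelMatrix G).mulVec φ = 0)
    (hgcd : Finset.univ.gcd φ = 1) :
    ∀ i j, φ i - φ j ≡ 2 * ((G.degree i : ℤ) - (G.degree j : ℤ)) [ZMOD 8] := by
  set σ : ℤ := ∑ j, φ j with hσ
  set N : Fin n → ℤ := fun i => ∑ j ∈ G.neighborFinset i, φ j with hNdef
  -- key equation from the nullspace condition
  have key : ∀ i, φ i = σ - 2 * N i := by
    intro i
    have h0 := congrFun hnull i
    simp only [Matrix.mulVec, dotProduct, seidelMatrix, Matrix.of_apply,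
      Pi.zero_apply] at h0
    have hterm : ∀ j, (if i = j then (0:ℤ) else if G.Adj i j then (-1:ℤ) else 1) * φ j
        = φ j - (if i = j then φ j else 0) - 2 * (if G.Adj i j then φ j else 0) := by
      intro j
      by_cases hij : i = j
      · subst hij; simp [G.irrefl]
      · by_cases hadj : G.Adj i j <;> simp [hij, hadj] <;> ring
    rw [Finset.sum_congr rfl (fun j _ => hterm j)] at h0
    have hNsum : ∑ j, (if G.Adj i j then φ j else 0) = N i := by
      rw [hNdef]
      simp only [SimpleGraph.neighborFinset_eq_filter, Finset.sum_filter]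
    simp only [Finset.sum_sub_distrib, ← Finset.mul_sum, Finset.sum_ite_eq,
      Finset.mem_univ, if_true, hNsum] at h0
    rw [← hσ] at h0
    linarith
  -- σ is odd
  have hσodd : Odd σ := by
    rcases Int.even_or_odd σ with he | ho
    · exfalso
      obtain ⟨m, hm⟩ := he
      have hdvd : (2:ℤ) ∣ Finset.univ.gcd φ := by
        apply Finset.dvd_gcd
        intro k _
        rw [key k, hm]
        exact ⟨m - N k, by ring⟩
      rw [hgcd] at hdvd
      norm_num at hdvd
    · exact ho
  -- every φ k is odd
  have hφodd : ∀ k, Odd (φ k) := by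
    intro k
    obtain ⟨a, ha⟩ := hσodd
    rw [key k, ha]
    exact ⟨a - N k, by ring⟩
  -- N k is even
  have hNeven : ∀ k, (2:ℤ) ∣ N k := by
    intro k
    have : ((N k : ℤ) : ZMod 2) = 0 := by
      rw [hNdef]
      push_cast
      have : ∀ j ∈ G.neighborFinset k, ((φ j : ℤ) : ZMod 2) = 1 := by
        intro j _
        obtain ⟨a, ha⟩ := hφodd j
        rw [ha]; push_cast
        have h2 : (2 : ZMod 2) = 0 := by decide
        rw [h2]; ring
      rw [Finset.sum_congr rfl this, Finset.sum_const, SimpleGraph.card_neighborFinset_eq_degree]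
      obtain ⟨m, hm⟩ := heven k
      rw [hm]
      simp only [nsmul_eq_mul, mul_one]
      push_cast
      have h2 : (2 : ZMod 2) = 0 := by decide
      rw [← two_mul, h2, zero_mul]
    exact (ZMod.intCast_zmod_eq_zero_iff_dvd (N k) 2).mp this
  -- φ k ≡ σ mod 4
  have hmod4 : ∀ k, ((φ k : ℤ) : ZMod 4) = ((σ : ℤ) : ZMod 4) := by
    intro k
    obtain ⟨m, hm⟩ := hNeven k
    rw [key k, hm]
    push_cast
    have h4 : (4 : ZMod 4) = 0 := by decide
    have : (2 : ZMod 4) * (2 * (m : ZMod 4)) = 4 * m := by ring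
    rw [this, h4]
    ring
  -- N k ≡ degree k * σ mod 4
  have hN4 : ∀ k, (4:ℤ) ∣ N k - (G.degree k : ℤ) * σ := by
    intro k
    have hc : ((N k - (G.degree k : ℤ) * σ : ℤ) : ZMod 4) = 0 := by
      push_cast
      rw [hNdef]
      push_cast
      rw [Finset.sum_congr rfl (fun j _ => hmod4 j), Finset.sum_const,
        SimpleGraph.card_neighborFinset_eq_degree]
      simp [nsmul_eq_mul]
    exact (ZMod.intCast_zmod_eq_zero_iff_dvd _ 4).mp hc
  -- conclude
  intro i j
  obtain ⟨ti, hti⟩ := hN4 i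
  obtain ⟨tj, htj⟩ := hN4 j
  obtain ⟨a, ha⟩ := hσodd
  obtain ⟨u, hu⟩ := heven i
  obtain ⟨v, hv⟩ := heven j
  have hdi : (G.degree i : ℤ) = 2 * u := by rw [hu]; push_cast; ring
  have hdj : (G.degree j : ℤ) = 2 * v := by rw [hv]; push_cast; ring
  have hNi : N i = (G.degree i : ℤ) * σ + 4 * ti := by linarith
  have hNj : N j = (G.degree j : ℤ) * σ + 4 * tj := by linarith
  have e : 2 * ((G.degree i : ℤ) - (G.degree j : ℤ)) - (φ i - φ j)
      = 8 * ((a + 1) * ((u : ℤ) - (v : ℤ)) + ti - tj) := by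
    rw [key i, key j, hNi, hNj, hdi, hdj, ha]; ring
  exact Int.modEq_iff_dvd.mpr ⟨_, e⟩
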